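/- Let ε ∈ (0,1). Then: (a) 0 ≤ h̃_ε(y) ≤ y and 0 ≤ h̃_ε'(y) ≤ 2 for all y > 0; and (b) there exists a constant c₀ ∈ (0,1) such that for all 0 < y ≤ 2c₀: h̃_ε(y) ≥ y/2, 1/2 ≤ h̃_ε'(y) ≤ 1, and −h̃_ε''(y) ≥ (ε/2) y^{ε−1}. -/

import Mathlib

open Real

/-- `h̃_ε(y) := y − (1+ε)^{−1} y^{1+ε} (1+y)^{−ε}`. -/
noncomputable def htil (ε y : ℝ) : ℝ := y - (1 + ε)⁻¹ * y ^ (1 + ε) * (1 + y) ^ (-ε)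

noncomputable def Dh (ε y : ℝ) : ℝ :=
  1 - y ^ ε * (1 + y) ^ (-ε) + ε * (1 + ε)⁻¹ * (y ^ (1 + ε) * (1 + y) ^ (-ε - 1))

lemma hasDerivAt_htil (ε : ℝ) (hε : 0 < ε) {y : ℝ} (hy : 0 < y) :
    HasDerivAt (htil ε) (Dh ε y) y := by
  have h1y : (0:ℝ) < 1 + y := by linarith
  have hf : HasDerivAt (fun x : ℝ => x ^ (1 + ε)) ((1 + ε) * y ^ ε) y := by
    have := Real.hasDerivAt_rpow_const (x := y) (p := 1 + ε) (Or.inl hy.ne')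
    simpa [show (1:ℝ) + ε - 1 = ε by ring] using this
  have hg : HasDerivAt (fun x : ℝ => (1 + x) ^ (-ε)) (1 * -ε * (1 + y) ^ (-ε - 1)) y := by
    have hbase : HasDerivAt (fun x : ℝ => 1 + x) 1 y := by
      simpa using (hasDerivAt_id y).const_add (1:ℝ)
    exact hbase.rpow_const (Or.inl h1y.ne')
  have h := (hasDerivAt_id y).sub (((hf.const_mul ((1+ε)⁻¹)).mul hg))
  have hne : (1:ℝ) + ε ≠ 0 := by positivity
  refine h.congr_deriv ?_
  unfold Dh
  field_simp
  ring

lemma hasDerivAt_Dh (ε : ℝ) (hε : 0 < ε) {y : ℝ} (hy : 0 < y) :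
    HasDerivAt (Dh ε) (-(ε * y ^ (ε - 1) * (1 + y) ^ (-ε - 2))) y := by
  have h1y : (0:ℝ) < 1 + y := by linarith
  have hne : (1:ℝ) + ε ≠ 0 := by positivity
  have hf1 : HasDerivAt (fun x : ℝ => x ^ ε) (ε * y ^ (ε - 1)) y :=
    Real.hasDerivAt_rpow_const (Or.inl hy.ne')
  have hbase : HasDerivAt (fun x : ℝ => 1 + x) 1 y := by
    simpa using (hasDerivAt_id y).const_add (1:ℝ)
  have hg1 : HasDerivAt (fun x : ℝ => (1 + x) ^ (-ε)) (1 * -ε * (1 + y) ^ (-ε - 1)) y :=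
    hbase.rpow_const (Or.inl h1y.ne')
  have hf2 : HasDerivAt (fun x : ℝ => x ^ (1 + ε)) ((1 + ε) * y ^ ε) y := by
    have := Real.hasDerivAt_rpow_const (x := y) (p := 1 + ε) (Or.inl hy.ne')
    simpa [show (1:ℝ) + ε - 1 = ε by ring] using this
  have hg2 : HasDerivAt (fun x : ℝ => (1 + x) ^ (-ε - 1)) (1 * (-ε - 1) * (1 + y) ^ (-ε - 1 - 1)) y :=
    hbase.rpow_const (Or.inl h1y.ne')
  have h := ((hasDerivAt_const y (1:ℝ)).sub (hf1.mul hg1)).add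
    (((hf2.mul hg2)).const_mul (ε * (1 + ε)⁻¹))
  refine h.congr_deriv ?_
  have ey : y ^ ε = y ^ (ε - 1) * y := by
    have h := Real.rpow_add hy (ε - 1) 1
    rw [Real.rpow_one, show ε - 1 + 1 = ε by ring] at h; exact h
  have ey2 : y ^ (1 + ε) = y ^ (ε - 1) * (y * y) := by
    have h := Real.rpow_add hy (ε - 1) 2
    rw [show ε - 1 + 2 = 1 + ε by ring, show (2:ℝ) = ((2:ℕ):ℝ) by norm_num,
      Real.rpow_natCast] at h
    rw [h]; ring
  have e1 : (1 + y) ^ (-ε) = (1 + y) ^ (-ε - 2) * ((1 + y) * (1 + y)) := by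
    have h := Real.rpow_add h1y (-ε - 2) 2
    rw [show -ε - 2 + 2 = -ε by ring, show (2:ℝ) = ((2:ℕ):ℝ) by norm_num,
      Real.rpow_natCast] at h
    rw [h]; ring
  have e2 : (1 + y) ^ (-ε - 1) = (1 + y) ^ (-ε - 2) * (1 + y) := by
    have h := Real.rpow_add h1y (-ε - 2) 1
    rw [Real.rpow_one, show -ε - 2 + 1 = -ε - 1 by ring] at h; exact h
  have e3 : (1 + y) ^ (-ε - 1 - 1) = (1 + y) ^ (-ε - 2) := by
    rw [show -ε - 1 - 1 = -ε - 2 by ring]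
  rw [ey, ey2, e1, e2, e3]
  field_simp
  ring

theorem htil_properties (ε : ℝ) (hε : 0 < ε) (hε' : ε < 1) :
    (∀ y : ℝ, 0 < y →
        0 ≤ htil ε y ∧ htil ε y ≤ y ∧ 0 ≤ deriv (htil ε) y ∧ deriv (htil ε) y ≤ 2) ∧
      ∃ c₀ : ℝ, 0 < c₀ ∧ c₀ < 1 ∧ ∀ y : ℝ, 0 < y → y ≤ 2 * c₀ →
        htil ε y ≥ y / 2 ∧ 1 / 2 ≤ deriv (htil ε) y ∧ deriv (htil ε) y ≤ 1 ∧
          -(deriv (deriv (htil ε)) y) ≥ ε / 2 * y ^ (ε - 1) := by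
  have hne : (1:ℝ) + ε ≠ 0 := by positivity
  have hinv1 : (1 + ε)⁻¹ ≤ 1 := by
    rw [inv_le_one_iff₀]; right; linarith
  have hinv0 : 0 < (1 + ε)⁻¹ := by positivity
  -- basic facts for a fixed y > 0
  have key : ∀ y : ℝ, 0 < y →
      ∃ P : ℝ, 0 ≤ P ∧ P ≤ 1 ∧ P ≤ y ^ ε ∧
        htil ε y = y - (1 + ε)⁻¹ * (y * P) ∧
        ∃ Q : ℝ, 0 ≤ Q ∧ Q ≤ P ∧ deriv (htil ε) y = 1 - P + Q := by
    intro y hy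
    have h1y : (0:ℝ) < 1 + y := by linarith
    refine ⟨y ^ ε * (1 + y) ^ (-ε), by positivity, ?_, ?_, ?_, ?_⟩
    · -- P ≤ 1
      rw [Real.rpow_neg h1y.le, ← div_eq_mul_inv,
        div_le_one (Real.rpow_pos_of_pos h1y ε)]
      exact Real.rpow_le_rpow hy.le (by linarith) hε.le
    · -- P ≤ y ^ ε
      have : (1 + y) ^ (-ε) ≤ 1 :=
        Real.rpow_le_one_of_one_le_of_nonpos (by linarith) (by linarith)
      nlinarith [Real.rpow_pos_of_pos hy ε]
    · -- htil rewrite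
      unfold htil
      have ey : y ^ (1 + ε) = y * y ^ ε := by
        have h := Real.rpow_add hy 1 ε
        rw [Real.rpow_one] at h; exact h
      rw [ey]; ring
    · -- derivative
      refine ⟨ε * (1 + ε)⁻¹ * (y * (1 + y)⁻¹) * (y ^ ε * (1 + y) ^ (-ε)), by positivity, ?_, ?_⟩
      · have h1 : ε * (1 + ε)⁻¹ ≤ 1 := by
          rw [← div_eq_mul_inv, div_le_one (by positivity)]; linarith
        have h2 : y * (1 + y)⁻¹ ≤ 1 := by
          rw [← div_eq_mul_inv, div_le_one h1y]; linarith
        have hc0 : 0 ≤ ε * (1 + ε)⁻¹ * (y * (1 + y)⁻¹) := by positivity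
        have hc1 : ε * (1 + ε)⁻¹ * (y * (1 + y)⁻¹) ≤ 1 := by
          calc ε * (1 + ε)⁻¹ * (y * (1 + y)⁻¹) ≤ 1 * 1 :=
            mul_le_mul h1 h2 (by positivity) zero_le_one
          _ = 1 := by norm_num
        have hP0' : 0 ≤ y ^ ε * (1 + y) ^ (-ε) := by positivity
        exact mul_le_of_le_one_left hP0' hc1
      · rw [(hasDerivAt_htil ε hε hy).deriv]
        unfold Dh
        have ey : y ^ (1 + ε) = y * y ^ ε := by
          have h := Real.rpow_add hy 1 ε
          rw [Real.rpow_one] at h; exact h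
        have e2 : (1 + y) ^ (-ε - 1) = (1 + y) ^ (-ε) * (1 + y)⁻¹ := by
          have h := Real.rpow_add h1y (-ε) (-1)
          rw [Real.rpow_neg_one, show -ε + -1 = -ε - 1 by ring] at h; exact h
        rw [ey, e2]; ring
  constructor
  · intro y hy
    obtain ⟨P, hP0, hP1, _, hh, Q, hQ0, hQP, hd⟩ := key y hy
    have hyP0 : 0 ≤ y * P := mul_nonneg hy.le hP0
    have hb1 : (1 + ε)⁻¹ * (y * P) ≤ y * P := mul_le_of_le_one_left hyP0 hinv1
    have hb2 : y * P ≤ y := by nlinarith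
    have hb0 : 0 ≤ (1 + ε)⁻¹ * (y * P) := by positivity
    refine ⟨?_, ?_, ?_, ?_⟩
    · rw [hh]; linarith
    · rw [hh]; linarith
    · rw [hd]; linarith
    · rw [hd]; linarith
  · refine ⟨min ((1/2 : ℝ) ^ (ε⁻¹) / 2) (1/10), ?_, ?_, ?_⟩
    · have := Real.rpow_pos_of_pos (show (0:ℝ) < 1/2 by norm_num) ε⁻¹
      simp only [lt_min_iff]
      constructor <;> [linarith; norm_num]
    · calc min ((1/2 : ℝ) ^ (ε⁻¹) / 2) (1/10) ≤ 1/10 := min_le_right _ _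
        _ < 1 := by norm_num
    · intro y hy hyle
      have hy5 : y ≤ 1/5 := by
        have := min_le_right ((1/2 : ℝ) ^ (ε⁻¹) / 2) (1/10)
        linarith
      have hyhalf : y ^ ε ≤ 1/2 := by
        have h1 : y ≤ (1/2 : ℝ) ^ (ε⁻¹) := by
          have := min_le_left ((1/2 : ℝ) ^ (ε⁻¹) / 2) (1/10)
          linarith
        have h2 : y ^ ε ≤ ((1/2 : ℝ) ^ (ε⁻¹)) ^ ε :=
          Real.rpow_le_rpow hy.le h1 hε.le
        have h3 : ((1/2 : ℝ) ^ (ε⁻¹)) ^ ε = (1/2 : ℝ) := by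
          rw [← Real.rpow_mul (by norm_num : (0:ℝ) ≤ 1/2),
            inv_mul_cancel₀ hε.ne', Real.rpow_one]
        linarith
      obtain ⟨P, hP0, hP1, hPy, hh, Q, hQ0, hQP, hd⟩ := key y hy
      have hPhalf : P ≤ 1/2 := le_trans hPy hyhalf
      have h1y : (0:ℝ) < 1 + y := by linarith
      have hyP0 : 0 ≤ y * P := mul_nonneg hy.le hP0
      have hb1 : (1 + ε)⁻¹ * (y * P) ≤ y * P := mul_le_of_le_one_left hyP0 hinv1
      have hb2 : y * P ≤ y * (1/2) := by nlinarith
      refine ⟨?_, ?_, ?_, ?_⟩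
      · rw [hh]; linarith
      · rw [hd]; linarith
      · rw [hd]; linarith
      · -- second derivative
        have hdd : deriv (deriv (htil ε)) y = -(ε * y ^ (ε - 1) * (1 + y) ^ (-ε - 2)) := by
          have heq : deriv (htil ε) =ᶠ[nhds y] Dh ε := by
            filter_upwards [isOpen_Ioi.mem_nhds (show y ∈ Set.Ioi (0:ℝ) from hy)] with z hz
            exact (hasDerivAt_htil ε hε hz).deriv
          rw [heq.deriv_eq, (hasDerivAt_Dh ε hε hy).deriv]
        rw [hdd, neg_neg]
        have hpow : (1/2 : ℝ) ≤ (1 + y) ^ (-ε - 2) := by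
          have e : (1 + y) ^ (-ε - 2) = ((1 + y) ^ (ε + 2))⁻¹ := by
            rw [← Real.rpow_neg h1y.le, show -(ε + 2) = -ε - 2 by ring]
          rw [e]
          have h1 : (1 + y) ^ (ε + 2) ≤ (1 + y) ^ (3:ℝ) :=
            Real.rpow_le_rpow_of_exponent_le (by linarith) (by linarith)
          have h2 : (1 + y) ^ (3:ℝ) ≤ 2 := by
            rw [show (3:ℝ) = ((3:ℕ):ℝ) by norm_num, Real.rpow_natCast]
            have hp := pow_le_pow_left₀ (show (0:ℝ) ≤ 1 + y by linarith)
              (show 1 + y ≤ 6/5 by linarith) 3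
            norm_num at hp
            linarith
          have h3 : 0 < (1 + y) ^ (ε + 2) := Real.rpow_pos_of_pos h1y _
          rw [le_inv_comm₀ (by norm_num) h3]
          calc (1 + y) ^ (ε + 2) ≤ 2 := le_trans h1 h2
            _ = (1/2 : ℝ)⁻¹ := by norm_num
        have hyp : 0 < y ^ (ε - 1) := Real.rpow_pos_of_pos hy _
        calc ε * y ^ (ε - 1) * (1 + y) ^ (-ε - 2)
            ≥ ε * y ^ (ε - 1) * (1/2) := by
              apply mul_le_mul_of_nonneg_left hpow (by positivity)
          _ = ε / 2 * y ^ (ε - 1) := by ring
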